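/- Let X, Y be Banach spaces, f : X → Y, v₁, v₂ ∈ X, k, l, m ∈ ℕ, and y, z ∈ Y. Then the set A of all x ∈ X satisfying: (i) ‖(f(x+tu)−f(x))/t − y‖ < 1/l for all u with ‖u−v₁‖ < 1/m and all 0 < t < 1/k; (ii) ‖(f(x+tu)−f(x))/t − z‖ < 1/l for all u with ‖u−v₂‖ < 1/m and all 0 < t < 1/k; (iii) ‖(f(x+s(v₁+v₂))−f(x))/s − (y+z)‖ > 3/l for arbitrarily small s > 0; is directionally porous in X. -/

import Mathlib

open Metric

/-- `M` is porous at `a` in direction `v`: there is `c > 0` such that for every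
`ε > 0` there are `t ≥ 0` and `r > 0` with `b = a + t • v`, `‖a - b‖ < ε`,
`B(b,r) ∩ M = ∅` and `r > c * ‖a - b‖`. -/
def PorousAtInDir {X : Type*} [NormedAddCommGroup X] [NormedSpace ℝ X]
    (M : Set X) (a v : X) : Prop :=
  ∃ c > (0:ℝ), ∀ ε > (0:ℝ), ∃ t : ℝ, 0 ≤ t ∧ ∃ r > (0:ℝ),
    ‖a - (a + t • v)‖ < ε ∧ r > c * ‖a - (a + t • v)‖ ∧
    Metric.ball (a + t • v) r ∩ M = ∅

/-- `M` is directionally porous: at each of its points it is porous in some direction. -/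
def DirectionallyPorous {X : Type*} [NormedAddCommGroup X] [NormedSpace ℝ X]
    (M : Set X) : Prop :=
  ∀ a ∈ M, ∃ v : X, v ≠ 0 ∧ PorousAtInDir M a v

theorem dirPorous_of_difference_quotient_conditions
    {X Y : Type*} [NormedAddCommGroup X] [NormedSpace ℝ X] [CompleteSpace X]
    [NormedAddCommGroup Y] [NormedSpace ℝ Y] [CompleteSpace Y]
    (f : X → Y) (v₁ v₂ : X) (k l m : ℕ) (hk : 0 < k) (hl : 0 < l) (hm : 0 < m)
    (y z : Y) :
    DirectionallyPorous {x : X |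
      (∀ u : X, ‖u - v₁‖ < 1 / (m:ℝ) → ∀ t : ℝ, 0 < t → t < 1 / (k:ℝ) →
        ‖t⁻¹ • (f (x + t • u) - f x) - y‖ < 1 / (l:ℝ)) ∧
      (∀ u : X, ‖u - v₂‖ < 1 / (m:ℝ) → ∀ t : ℝ, 0 < t → t < 1 / (k:ℝ) →
        ‖t⁻¹ • (f (x + t • u) - f x) - z‖ < 1 / (l:ℝ)) ∧
      (∀ ε > (0:ℝ), ∃ s : ℝ, 0 < s ∧ s < ε ∧
        ‖s⁻¹ • (f (x + s • (v₁ + v₂)) - f x) - (y + z)‖ > 3 / (l:ℝ))} := by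
  rintro a ⟨h1, h2, h3⟩
  have hk' : (0:ℝ) < 1 / k := by positivity
  have hm' : (0:ℝ) < 1 / m := by positivity
  have hl' : (0:ℝ) < 1 / l := by positivity
  by_cases hv : v₁ = 0
  · exfalso
    subst hv
    obtain ⟨s, hs0, hslt, hs3⟩ := h3 (1 / k) hk'
    have e1 := h1 0 (by rw [sub_self, norm_zero]; exact hm') s hs0 hslt
    simp only [smul_zero, add_zero, sub_self, zero_sub, norm_neg] at e1
    have e2 := h2 v₂ (by rw [sub_self, norm_zero]; exact hm') s hs0 hslt
    rw [zero_add] at hs3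
    have key : s⁻¹ • (f (a + s • v₂) - f a) - (y + z)
        = (s⁻¹ • (f (a + s • v₂) - f a) - z) - y := by abel
    rw [key] at hs3
    have hns := norm_sub_le (s⁻¹ • (f (a + s • v₂) - f a) - z) y
    have hl0 : (0:ℝ) < l := by exact_mod_cast hl
    have h23 : (2:ℝ) / l < 3 / l := by gcongr <;> norm_num
    have hdd : (1:ℝ) / l + 1 / l = 2 / l := by ring
    linarith
  · have hv' : (0:ℝ) < ‖v₁‖ := norm_pos_iff.mpr hv
    refine ⟨v₁, hv, 1 / (2 * m * ‖v₁‖), by positivity, ?_⟩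
    intro ε hε
    obtain ⟨s, hs0, hslt, hs3⟩ := h3 (min (1 / k) (ε / ‖v₁‖)) (lt_min hk' (by positivity))
    have hsk : s < 1 / k := hslt.trans_le (min_le_left _ _)
    have hsε : s < ε / ‖v₁‖ := hslt.trans_le (min_le_right _ _)
    have hnorm : ‖a - (a + s • v₁)‖ = s * ‖v₁‖ := by
      rw [sub_add_cancel_left, norm_neg, norm_smul, Real.norm_eq_abs, abs_of_pos hs0]
    refine ⟨s, hs0.le, s / m, by positivity, ?_, ?_, ?_⟩
    · rw [hnorm]; exact (lt_div_iff₀ hv').mp hsε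
    · rw [hnorm]
      have key : 1 / (2 * (m:ℝ) * ‖v₁‖) * (s * ‖v₁‖) = s / (2 * m) := by
        field_simp
      rw [key]
      have hm0 : (0:ℝ) < m := by exact_mod_cast hm
      apply div_lt_div_of_pos_left hs0 hm0
      linarith
    · rw [Set.eq_empty_iff_forall_notMem]
      rintro x' ⟨hb, hA1, hA2, hA3⟩
      rw [mem_ball, dist_eq_norm] at hb
      set u : X := s⁻¹ • (x' - a) with hu_def
      have hau : a + s • u = x' := by
        rw [hu_def, smul_inv_smul₀ hs0.ne', add_sub_cancel]
      have hdist : s⁻¹ * ‖x' - (a + s • v₁)‖ < 1 / m := by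
        have h := mul_lt_mul_of_pos_left hb (inv_pos.mpr hs0)
        calc s⁻¹ * ‖x' - (a + s • v₁)‖ < s⁻¹ * (s / m) := h
          _ = 1 / m := by field_simp
      have hu : ‖u - v₁‖ < 1 / m := by
        have : u - v₁ = s⁻¹ • (x' - (a + s • v₁)) := by
          rw [hu_def]
          match_scalars <;> field_simp
        rw [this, norm_smul, Real.norm_eq_abs, abs_of_pos (inv_pos.mpr hs0)]
        exact hdist
      have eA := h1 u hu s hs0 hsk
      rw [hau] at eA
      set w : X := v₂ + s⁻¹ • (a + s • v₁ - x') with hw_def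
      have hw : ‖w - v₂‖ < 1 / m := by
        rw [hw_def, add_sub_cancel_left, norm_smul, Real.norm_eq_abs,
          abs_of_pos (inv_pos.mpr hs0), norm_sub_rev]
        exact hdist
      have hxw : x' + s • w = a + s • (v₁ + v₂) := by
        rw [hw_def]
        match_scalars <;> field_simp <;> ring
      have eB := hA2 w hw s hs0 hsk
      rw [hxw] at eB
      have hsum : s⁻¹ • (f (a + s • (v₁ + v₂)) - f a) - (y + z)
          = (s⁻¹ • (f (a + s • (v₁ + v₂)) - f x') - z)
            + (s⁻¹ • (f x' - f a) - y) := by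
        rw [smul_sub, smul_sub, smul_sub]; abel
      rw [hsum] at hs3
      have hns := norm_add_le (s⁻¹ • (f (a + s • (v₁ + v₂)) - f x') - z)
        (s⁻¹ • (f x' - f a) - y)
      have hl0 : (0:ℝ) < l := by exact_mod_cast hl
      have h23 : (2:ℝ) / l < 3 / l := by gcongr <;> norm_num
      have hdd : (1:ℝ) / l + 1 / l = 2 / l := by ring
      linarith
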